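/- In the ring of formal power series ℤ[[q]], ∏_{i=1}^{∞}(1-q^i)^3 = Σ_{k∈ℤ} (-1)^k · k · q^{k(k+1)/2}, where the bilateral sum is well-defined since for each fixed power of q only finitely many terms contribute. -/

import Mathlib

open Finset PowerSeries

local notation "Y" => (Polynomial.X : Polynomial ℤ)
/-- `(q;q)_n = ∏_{i=1}^n (1-q^i)` -/
noncomputable def Pz (n : ℕ) : Polynomial ℤ := ∏ i ∈ Finset.range n, (1 - Y ^ (i+1))

/-- Gaussian binomial coefficient. -/
noncomputable def qb : ℕ → ℕ → Polynomial ℤ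
  | _, 0 => 1
  | 0, _+1 => 0
  | n+1, k+1 => qb n (k+1) + Y ^ (n-k) * qb n k

@[simp] lemma qb_zero_right (n : ℕ) : qb n 0 = 1 := by cases n <;> rfl

lemma qb_succ_succ (n k : ℕ) : qb (n+1) (k+1) = qb n (k+1) + Y ^ (n-k) * qb n k := rfl

lemma qb_eq_zero : ∀ {n k : ℕ}, n < k → qb n k = 0
  | 0, _+1, _ => rfl
  | n+1, k+1, h => by
      rw [qb_succ_succ, qb_eq_zero (by omega), qb_eq_zero (by omega), mul_zero, add_zero]

@[simp] lemma qb_self : ∀ n : ℕ, qb n n = 1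
  | 0 => rfl
  | n+1 => by rw [qb_succ_succ, qb_eq_zero (by omega), Nat.sub_self, pow_zero, one_mul,
      qb_self n, zero_add]

lemma qb_L : ∀ (n k : ℕ), (1 - Y^(k+1)) * qb n (k+1) = (1 - Y^(n-k)) * qb n k
  | 0, 0 => by simp [qb_eq_zero]
  | 0, k+1 => by rw [qb_eq_zero (by omega), qb_eq_zero (by omega), mul_zero, mul_zero]
  | n+1, k => by
      rcases Nat.lt_or_ge (n+1) (k+1) with h | h
      · rcases Nat.eq_or_lt_of_le (show n+1 ≤ k by omega) with h' | h'
        · rw [qb_eq_zero (by omega), show (n+1) - k = 0 by omega, pow_zero, sub_self,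
            mul_zero, zero_mul]
        · rw [qb_eq_zero (by omega), qb_eq_zero (by omega), mul_zero, mul_zero]
      -- now k ≤ n
      have hk : k ≤ n := by omega
      have hpow : Y^(n-k) * Y^(k+1) = Y^(n+1) := by rw [← pow_add]; congr 1; omega
      have lhs_eq : (1 - Y^(k+1)) * qb (n+1) (k+1) = (1 - Y^(n+1)) * qb n k := by
        rw [qb_succ_succ]
        linear_combination (qb_L n k) + (-(qb n k)) * hpow
      rw [lhs_eq]
      cases k with
      | zero => simp
      | succ k' =>
          rw [show (n+1) - (k'+1) = n - k' from by omega, qb_succ_succ]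
          have hpow' : Y^(n-k') * Y^(k'+1) = Y^(n+1) := by rw [← pow_add]; congr 1; omega
          linear_combination (qb n (k'+1)) * hpow' + (Y^(n-k')) * (qb_L n k')

lemma pascal1 (n k : ℕ) : qb (n+1) (k+1) = Y^(k+1) * qb n (k+1) + qb n k := by
  rw [qb_succ_succ]
  linear_combination qb_L n k

lemma qb_symm : ∀ (n k : ℕ), k ≤ n → qb n (n-k) = qb n k
  | 0, 0, _ => rfl
  | n+1, 0, _ => by simp
  | n+1, k+1, h => by
      rcases Nat.eq_or_lt_of_le h with h' | h'
      · rw [show (n+1)-(k+1) = 0 by omega, qb_zero_right, ← h', qb_self]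
      · have hk : k + 1 ≤ n := by omega
        rw [show (n+1)-(k+1) = (n-(k+1))+1 by omega, qb_succ_succ,
          show n - (n-(k+1)) = k+1 by omega, show (n-(k+1))+1 = n - k by omega,
          qb_symm n k (by omega), qb_symm n (k+1) hk, pascal1]
        ring

/-- classic: `∑_{i=0}^{N} (-1)^i q^{C(i,2)} [N,i] = 0` for `N = n+1 ≥ 1`. -/
lemma classic (n : ℕ) :
    ∑ i ∈ Finset.range (n+2), (-1:Polynomial ℤ)^i * Y^(i*(i-1)/2) * qb (n+1) i = 0 := by
  have step : ∀ i, (-1:Polynomial ℤ)^(i+1) * Y^((i+1)*i/2) * qb (n+1) (i+1)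
      = ((-1:Polynomial ℤ)^(i+1) * Y^((i+1)*(i+2)/2) * qb n (i+1))
        - ((-1:Polynomial ℤ)^i * Y^(i*(i+1)/2) * qb n i) := by
    intro i
    rw [pascal1, show (i+1)*(i+2)/2 = (i+1)*i/2 + (i+1) by
      rcases Nat.even_or_odd i with ⟨c,hc⟩|⟨c,hc⟩ <;> subst hc <;> ring_nf <;> omega,
      pow_add, pow_succ]
    ring
  rw [Finset.sum_range_succ' _ (n+1)]
  simp only [Nat.add_sub_cancel]
  simp only [step]
  rw [Finset.sum_range_sub (fun i => (-1:Polynomial ℤ)^i * Y^(i*(i+1)/2) * qb n i)]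
  simp [qb_eq_zero (Nat.lt_succ_self n)]

lemma tri_succ (j : ℕ) : (j+1)*(j+2)/2 = j*(j+1)/2 + (j+1) := by
  rcases Nat.even_or_odd j with ⟨c,hc⟩|⟨c,hc⟩ <;> subst hc <;> ring_nf <;> omega

lemma tri_step : ∀ j : ℕ, j*(j+1)/2 = j*(j-1)/2 + j
  | 0 => rfl
  | j+1 => by rw [show (j+1)*(j+1-1)/2 = j*(j+1)/2 by rw [Nat.add_sub_cancel, mul_comm],
      tri_succ]

lemma tri_pred (j n : ℕ) (h : j ≤ n+1) : j*(j+1)/2 + (n+1-j) = (n+1) + j*(j-1)/2 := by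
  rw [tri_step j]; generalize j*(j-1)/2 = t; omega

lemma Glem0 : ∀ n : ℕ, ∑ j ∈ Finset.range (n+1),
    (-1:Polynomial ℤ)^j * Y^(j*(j+1)/2) * qb (n+1) (n-j) = 1
  | 0 => by simp
  | n+1 => by
    have IH := Glem0 n
    rw [Finset.sum_range_succ]
    have congr1 : ∀ j ∈ Finset.range (n+1),
        (-1:Polynomial ℤ)^j * Y^(j*(j+1)/2) * qb (n+2) (n+1-j)
        = ((-1:Polynomial ℤ)^j * (Y^(n+1) * (Y^(j*(j-1)/2) * qb (n+1) (n+1-j)))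
          + (-1:Polynomial ℤ)^j * Y^(j*(j+1)/2) * qb (n+1) (n-j)) := by
      intro j hj
      simp only [Finset.mem_range] at hj
      have hY : Y^(j*(j+1)/2) * Y^(n+1-j) = Y^(n+1) * Y^(j*(j-1)/2) := by
        rw [← pow_add, ← pow_add, tri_pred j n (by omega)]
      rw [show n+1-j = (n-j)+1 by omega, pascal1, show (n-j)+1 = n+1-j by omega]
      linear_combination ((-1:Polynomial ℤ)^j * qb (n+1) (n+1-j)) * hY
    rw [Finset.sum_congr rfl congr1, Finset.sum_add_distrib, IH]
    have hs : ∀ j ∈ Finset.range (n+2),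
        (-1:Polynomial ℤ)^j * Y^(j*(j-1)/2) * qb (n+1) (n+1-j)
        = (-1:Polynomial ℤ)^j * Y^(j*(j-1)/2) * qb (n+1) j := by
      intro j hj
      simp only [Finset.mem_range] at hj
      rw [qb_symm (n+1) j (by omega)]
    have hclassic2 : ∑ j ∈ Finset.range (n+2),
        (-1:Polynomial ℤ)^j * Y^(j*(j-1)/2) * qb (n+1) (n+1-j) = 0 := by
      rw [Finset.sum_congr rfl hs]; exact classic n
    rw [Finset.sum_range_succ] at hclassic2
    have h2 : ∑ j ∈ Finset.range (n+1),
        (-1:Polynomial ℤ)^j * Y^(j*(j-1)/2) * qb (n+1) (n+1-j)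
        = -((-1:Polynomial ℤ)^(n+1) * Y^((n+1)*(n+1-1)/2) * qb (n+1) (n+1-(n+1))) := by
      linear_combination hclassic2
    have hmul : ∀ j ∈ Finset.range (n+1),
        (-1:Polynomial ℤ)^j * (Y^(n+1) * (Y^(j*(j-1)/2) * qb (n+1) (n+1-j)))
        = Y^(n+1) * ((-1:Polynomial ℤ)^j * Y^(j*(j-1)/2) * qb (n+1) (n+1-j)) := by
      intro j hj; ring
    rw [Finset.sum_congr rfl hmul, ← Finset.mul_sum, h2]
    have hYe : Y^(n+1) * Y^((n+1)*(n+1-1)/2) = Y^((n+1)*(n+2)/2) := by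
      rw [← pow_add]; congr 1
      rw [Nat.add_sub_cancel, mul_comm (n+1) n, tri_succ n]
      exact Nat.add_comm _ _
    simp only [Nat.sub_self, qb_zero_right, mul_one]
    linear_combination (-(-1:Polynomial ℤ)^(n+1)) * hYe

lemma powY {a b c d : ℕ} (h : a + b = c + d) : (Y^a * Y^b : Polynomial ℤ) = Y^c * Y^d := by
  rw [← pow_add, ← pow_add, h]

lemma tri1 (k m : ℕ) (hk : k ≤ m) :
    (k+1)*(k+1+1)/2 + (m+1-(k+1)) = (m+1) + k*(k+1)/2 := by
  rw [show (k+1)*(k+1+1)/2 = k*(k+1)/2 + (k+1) from tri_succ k]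
  generalize k*(k+1)/2 = t; omega

lemma tri2 (j m : ℕ) : j*(j+1)/2 + (m+j+2) = (m+1) + (j+1)*(j+1+1)/2 := by
  rw [show (j+1)*(j+1+1)/2 = j*(j+1)/2 + (j+1) from tri_succ j]
  generalize j*(j+1)/2 = t; omega

lemma Glem : ∀ (m n : ℕ), ∑ k ∈ Finset.range (m+1),
    (-1:Polynomial ℤ)^k * Y^(k*(k+1)/2) * qb (m+n+1) (n+k+1)
    = ∑ j ∈ Finset.range (n+1), (-1:Polynomial ℤ)^j * Y^(j*(j+1)/2) * qb (m+n+1) (n-j)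
  | 0, n => by
      simp only [Nat.zero_add]
      rw [Glem0 n]
      simp
  | m+1, n => by
      have IH := Glem m n
      have hQ0 : qb (m+n+1) (n+(m+1)+1) = 0 := qb_eq_zero (by omega)
      -- LHS transformation
      have hL : ∑ k ∈ Finset.range (m+1+1),
          (-1:Polynomial ℤ)^k * Y^(k*(k+1)/2) * qb (m+1+n+1) (n+k+1)
          = (∑ j ∈ Finset.range (n+1),
              (-1:Polynomial ℤ)^j * Y^(j*(j+1)/2) * qb (m+n+1) (n-j))
            + (Y^(m+1) * qb (m+n+1) n
              - Y^(m+1) * ∑ j ∈ Finset.range (n+1),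
                (-1:Polynomial ℤ)^j * Y^(j*(j+1)/2) * qb (m+n+1) (n-j)) := by
        have hLsplit : ∀ k ∈ Finset.range (m+2),
            (-1:Polynomial ℤ)^k * Y^(k*(k+1)/2) * qb (m+1+n+1) (n+k+1)
            = (-1:Polynomial ℤ)^k * Y^(k*(k+1)/2) * qb (m+n+1) (n+k+1)
              + (-1:Polynomial ℤ)^k * (Y^(k*(k+1)/2) * Y^(m+1-k)) * qb (m+n+1) (n+k) := by
          intro k hk
          simp only [Finset.mem_range] at hk
          rw [show m+1+n+1 = (m+n+1)+1 by omega, show n+k+1 = (n+k)+1 from rfl,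
            qb_succ_succ, show (m+n+1)-(n+k) = m+1-k by omega]
          ring
        rw [Finset.sum_congr rfl hLsplit, Finset.sum_add_distrib]
        rw [Finset.sum_range_succ (fun k => (-1:Polynomial ℤ)^k * Y^(k*(k+1)/2)
          * qb (m+n+1) (n+k+1)) (m+1)]
        simp only [hQ0, mul_zero, add_zero]
        rw [IH]
        rw [Finset.sum_range_succ' (fun k => (-1:Polynomial ℤ)^k * (Y^(k*(k+1)/2)
          * Y^(m+1-k)) * qb (m+n+1) (n+k)) (m+1)]
        have hre : ∀ k ∈ Finset.range (m+1),
            (-1:Polynomial ℤ)^(k+1) * (Y^((k+1)*(k+1+1)/2) * Y^(m+1-(k+1)))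
              * qb (m+n+1) (n+(k+1))
            = -(Y^(m+1) * ((-1:Polynomial ℤ)^k * Y^(k*(k+1)/2) * qb (m+n+1) (n+k+1))) := by
          intro k hk
          simp only [Finset.mem_range] at hk
          rw [powY (tri1 k m (by omega)), show n+(k+1) = n+k+1 from rfl]
          ring
        rw [Finset.sum_congr rfl hre, Finset.sum_neg_distrib, ← Finset.mul_sum, IH]
        norm_num
        ring
      rw [hL]
      -- RHS transformation
      have hRsplit : ∀ j ∈ Finset.range n,
          (-1:Polynomial ℤ)^j * Y^(j*(j+1)/2) * qb (m+1+n+1) (n-j)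
          = (-1:Polynomial ℤ)^j * Y^(j*(j+1)/2) * qb (m+n+1) (n-j)
            + -(Y^(m+1) * ((-1:Polynomial ℤ)^(j+1) * Y^((j+1)*(j+1+1)/2)
                * qb (m+n+1) (n-(j+1)))) := by
        intro j hj
        simp only [Finset.mem_range] at hj
        rw [show m+1+n+1 = (m+n+1)+1 by omega, show n-j = (n-(j+1))+1 by omega,
          qb_succ_succ, show (m+n+1)-(n-(j+1)) = m+j+2 by omega,
          show (n-(j+1))+1 = n-j by omega]
        have hY : (Y^(j*(j+1)/2) * Y^(m+j+2) : Polynomial ℤ)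
            = Y^(m+1) * Y^((j+1)*(j+1+1)/2) := powY (tri2 j m)
        linear_combination ((-1:Polynomial ℤ)^j * qb (m+n+1) (n-(j+1))) * hY
      rw [Finset.sum_range_succ (fun j => (-1:Polynomial ℤ)^j * Y^(j*(j+1)/2)
        * qb (m+1+n+1) (n-j)) n]
      rw [Finset.sum_congr rfl hRsplit, Finset.sum_add_distrib, Finset.sum_neg_distrib,
        ← Finset.mul_sum]
      have hpeel : ∑ j ∈ Finset.range n, ((-1:Polynomial ℤ)^(j+1) * Y^((j+1)*(j+1+1)/2)
          * qb (m+n+1) (n-(j+1)))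
          = (∑ j ∈ Finset.range (n+1), (-1:Polynomial ℤ)^j * Y^(j*(j+1)/2)
              * qb (m+n+1) (n-j)) - qb (m+n+1) (n-0) := by
        rw [Finset.sum_range_succ' (fun j => (-1:Polynomial ℤ)^j * Y^(j*(j+1)/2)
          * qb (m+n+1) (n-j)) n]
        norm_num
      rw [hpeel]
      rw [Finset.sum_range_succ (fun j => (-1:Polynomial ℤ)^j * Y^(j*(j+1)/2)
        * qb (m+n+1) (n-j)) n]
      simp only [Nat.sub_self, Nat.sub_zero, qb_zero_right, mul_one]
      ring

lemma Pz_succ (n : ℕ) : Pz (n+1) = Pz n * (1 - Y^(n+1)) := Finset.prod_range_succ _ n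

/-- The RHS of the finite bilateral Jacobi identity, split into the parts `k ≥ 0`
and `k = -j-1 < 0` of the bilateral sum. -/
noncomputable def Rhs (m n : ℕ) : Polynomial ℤ :=
  ∑ k ∈ Finset.range (m+1),
      (-1:Polynomial ℤ)^k * (k:Polynomial ℤ) * Y^(k*(k+1)/2) * qb (m+n+1) (n+k+1)
  + ∑ j ∈ Finset.range (n+1),
      (-1:Polynomial ℤ)^j * ((j:Polynomial ℤ)+1) * Y^(j*(j+1)/2) * qb (m+n+1) (n-j)


/-- The RHS of the finite bilateral Jacobi identity, with the bilateral sum split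
into its nonnegative (`k ≥ 0`) and negative (`k = -j-1`) parts. -/
lemma Fstep (m n : ℕ) (IH : Pz m * Pz n = Rhs m n) : Pz (m+1) * Pz n = Rhs (m+1) n := by
  have hQ0 : qb (m+n+1) (n+(m+1)+1) = 0 := qb_eq_zero (by omega)
  rw [Pz_succ, mul_comm (Pz m) (1 - Y^(m+1)), mul_assoc, IH]
  rw [Rhs, Rhs]
  -- abbreviations
  set A := ∑ k ∈ Finset.range (m+1),
      (-1:Polynomial ℤ)^k * (k:Polynomial ℤ) * Y^(k*(k+1)/2) * qb (m+n+1) (n+k+1) with hA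
  set B := ∑ j ∈ Finset.range (n+1),
      (-1:Polynomial ℤ)^j * ((j:Polynomial ℤ)+1) * Y^(j*(j+1)/2) * qb (m+n+1) (n-j) with hB
  set gl := ∑ k ∈ Finset.range (m+1),
      (-1:Polynomial ℤ)^k * Y^(k*(k+1)/2) * qb (m+n+1) (n+k+1) with hgl
  set gr := ∑ j ∈ Finset.range (n+1),
      (-1:Polynomial ℤ)^j * Y^(j*(j+1)/2) * qb (m+n+1) (n-j) with hgr
  -- first sum of `Rhs (m+1) n`
  have hAsplit : ∀ k ∈ Finset.range (m+2),
      (-1:Polynomial ℤ)^k * (k:Polynomial ℤ) * Y^(k*(k+1)/2) * qb (m+1+n+1) (n+k+1)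
      = (-1:Polynomial ℤ)^k * (k:Polynomial ℤ) * Y^(k*(k+1)/2) * qb (m+n+1) (n+k+1)
        + (-1:Polynomial ℤ)^k * (k:Polynomial ℤ) * (Y^(k*(k+1)/2) * Y^(m+1-k))
          * qb (m+n+1) (n+k) := by
    intro k hk
    simp only [Finset.mem_range] at hk
    rw [show m+1+n+1 = (m+n+1)+1 by omega, show n+k+1 = (n+k)+1 from rfl,
      qb_succ_succ, show (m+n+1)-(n+k) = m+1-k by omega]
    ring
  have hA' : ∑ k ∈ Finset.range (m+1+1),
      (-1:Polynomial ℤ)^k * (k:Polynomial ℤ) * Y^(k*(k+1)/2) * qb (m+1+n+1) (n+k+1)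
      = A - Y^(m+1) * (A + gl) := by
    rw [Finset.sum_congr rfl hAsplit, Finset.sum_add_distrib]
    rw [Finset.sum_range_succ (fun k => (-1:Polynomial ℤ)^k * (k:Polynomial ℤ)
      * Y^(k*(k+1)/2) * qb (m+n+1) (n+k+1)) (m+1)]
    simp only [hQ0, mul_zero, add_zero]
    rw [← hA]
    rw [Finset.sum_range_succ' (fun k => (-1:Polynomial ℤ)^k * (k:Polynomial ℤ)
      * (Y^(k*(k+1)/2) * Y^(m+1-k)) * qb (m+n+1) (n+k)) (m+1)]
    have hre : ∀ k ∈ Finset.range (m+1),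
        (-1:Polynomial ℤ)^(k+1) * ((k+1:ℕ):Polynomial ℤ) * (Y^((k+1)*(k+1+1)/2)
          * Y^(m+1-(k+1))) * qb (m+n+1) (n+(k+1))
        = -(Y^(m+1) * ((-1:Polynomial ℤ)^k * (k:Polynomial ℤ) * Y^(k*(k+1)/2)
            * qb (m+n+1) (n+k+1)))
          + -(Y^(m+1) * ((-1:Polynomial ℤ)^k * Y^(k*(k+1)/2) * qb (m+n+1) (n+k+1))) := by
      intro k hk
      simp only [Finset.mem_range] at hk
      rw [powY (tri1 k m (by omega)), show n+(k+1) = n+k+1 from rfl]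
      push_cast
      ring
    rw [Finset.sum_congr rfl hre, Finset.sum_add_distrib, Finset.sum_neg_distrib,
      Finset.sum_neg_distrib, ← Finset.mul_sum, ← Finset.mul_sum, ← hA, ← hgl]
    norm_num
    ring
  rw [hA']
  -- second sum of `Rhs (m+1) n`
  have hBsplit : ∀ j ∈ Finset.range n,
      (-1:Polynomial ℤ)^j * ((j:Polynomial ℤ)+1) * Y^(j*(j+1)/2) * qb (m+1+n+1) (n-j)
      = (-1:Polynomial ℤ)^j * ((j:Polynomial ℤ)+1) * Y^(j*(j+1)/2) * qb (m+n+1) (n-j)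
        + -(Y^(m+1) * ((-1:Polynomial ℤ)^(j+1) * ((j:Polynomial ℤ)+1)
            * Y^((j+1)*(j+1+1)/2) * qb (m+n+1) (n-(j+1)))) := by
    intro j hj
    simp only [Finset.mem_range] at hj
    rw [show m+1+n+1 = (m+n+1)+1 by omega, show n-j = (n-(j+1))+1 by omega,
      qb_succ_succ, show (m+n+1)-(n-(j+1)) = m+j+2 by omega,
      show (n-(j+1))+1 = n-j by omega]
    have hY : (Y^(j*(j+1)/2) * Y^(m+j+2) : Polynomial ℤ)
        = Y^(m+1) * Y^((j+1)*(j+1+1)/2) := powY (tri2 j m)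
    linear_combination ((-1:Polynomial ℤ)^j * ((j:Polynomial ℤ)+1) * qb (m+n+1) (n-(j+1))) * hY
  have hB' : ∑ j ∈ Finset.range (n+1),
      (-1:Polynomial ℤ)^j * ((j:Polynomial ℤ)+1) * Y^(j*(j+1)/2) * qb (m+1+n+1) (n-j)
      = B - Y^(m+1) * (B - gr) := by
    rw [Finset.sum_range_succ (fun j => (-1:Polynomial ℤ)^j * ((j:Polynomial ℤ)+1)
      * Y^(j*(j+1)/2) * qb (m+1+n+1) (n-j)) n]
    rw [Finset.sum_congr rfl hBsplit, Finset.sum_add_distrib, Finset.sum_neg_distrib,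
      ← Finset.mul_sum]
    have hpeel : ∑ j ∈ Finset.range n, ((-1:Polynomial ℤ)^(j+1) * ((j:Polynomial ℤ)+1)
        * Y^((j+1)*(j+1+1)/2) * qb (m+n+1) (n-(j+1)))
        = (B - gr) - 0 := by
      have hconv : ∀ j ∈ Finset.range (n+1),
          (-1:Polynomial ℤ)^j * (j:Polynomial ℤ) * Y^(j*(j+1)/2) * qb (m+n+1) (n-j)
          = (-1:Polynomial ℤ)^j * ((j:Polynomial ℤ)+1) * Y^(j*(j+1)/2) * qb (m+n+1) (n-j)
            - (-1:Polynomial ℤ)^j * Y^(j*(j+1)/2) * qb (m+n+1) (n-j) := by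
        intro j hj; ring
      have h0 : ∑ j ∈ Finset.range (n+1),
          (-1:Polynomial ℤ)^j * (j:Polynomial ℤ) * Y^(j*(j+1)/2) * qb (m+n+1) (n-j)
          = B - gr := by
        rw [Finset.sum_congr rfl hconv, Finset.sum_sub_distrib, ← hB, ← hgr]
      rw [← h0, Finset.sum_range_succ' (fun j => (-1:Polynomial ℤ)^j * (j:Polynomial ℤ)
        * Y^(j*(j+1)/2) * qb (m+n+1) (n-j)) n]
      push_cast
      norm_num
    rw [hpeel]
    rw [show n-n = 0 from Nat.sub_self n, qb_zero_right]
    have hBpeel : B = (∑ j ∈ Finset.range n, (-1:Polynomial ℤ)^j * ((j:Polynomial ℤ)+1)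
        * Y^(j*(j+1)/2) * qb (m+n+1) (n-j))
        + (-1:Polynomial ℤ)^n * ((n:Polynomial ℤ)+1) * Y^(n*(n+1)/2) * 1 := by
      rw [hB, Finset.sum_range_succ, Nat.sub_self, qb_zero_right]
    rw [hBpeel]
    ring
  rw [hB']
  have hG := Glem m n
  rw [← hgl, ← hgr] at hG
  linear_combination (Y^(m+1)) * hG

lemma Fzero : ∀ m : ℕ, Pz m * Pz 0 = Rhs m 0
  | 0 => by
      rw [Rhs]
      simp [Pz]
  | m+1 => Fstep m 0 (Fzero m)

lemma Fsym (m n : ℕ) : Rhs m n = Rhs n m := by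
  rw [Rhs, Rhs]
  have h1 : ∀ k ∈ Finset.range (n+1),
      (-1:Polynomial ℤ)^k * (k:Polynomial ℤ) * Y^(k*(k+1)/2) * qb (n+m+1) (m+k+1)
      = (-1:Polynomial ℤ)^k * (k:Polynomial ℤ) * Y^(k*(k+1)/2) * qb (m+n+1) (n-k) := by
    intro k hk
    simp only [Finset.mem_range] at hk
    rw [show n+m+1 = m+n+1 by omega, show n-k = (m+n+1)-(m+k+1) by omega,
      qb_symm (m+n+1) (m+k+1) (by omega)]
  have h2 : ∀ j ∈ Finset.range (m+1),
      (-1:Polynomial ℤ)^j * ((j:Polynomial ℤ)+1) * Y^(j*(j+1)/2) * qb (n+m+1) (m-j)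
      = (-1:Polynomial ℤ)^j * ((j:Polynomial ℤ)+1) * Y^(j*(j+1)/2) * qb (m+n+1) (n+j+1) := by
    intro j hj
    simp only [Finset.mem_range] at hj
    rw [show n+m+1 = m+n+1 by omega, show m-j = (m+n+1)-(n+j+1) by omega,
      qb_symm (m+n+1) (n+j+1) (by omega)]
  rw [Finset.sum_congr rfl h1, Finset.sum_congr rfl h2]
  -- expand both sides using the cross terms and Glem
  have e1 : ∀ j ∈ Finset.range (n+1),
      (-1:Polynomial ℤ)^j * ((j:Polynomial ℤ)+1) * Y^(j*(j+1)/2) * qb (m+n+1) (n-j)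
      = (-1:Polynomial ℤ)^j * (j:Polynomial ℤ) * Y^(j*(j+1)/2) * qb (m+n+1) (n-j)
        + (-1:Polynomial ℤ)^j * Y^(j*(j+1)/2) * qb (m+n+1) (n-j) := by
    intro j hj; ring
  have e2 : ∀ k ∈ Finset.range (m+1),
      (-1:Polynomial ℤ)^k * ((k:Polynomial ℤ)+1) * Y^(k*(k+1)/2) * qb (m+n+1) (n+k+1)
      = (-1:Polynomial ℤ)^k * (k:Polynomial ℤ) * Y^(k*(k+1)/2) * qb (m+n+1) (n+k+1)
        + (-1:Polynomial ℤ)^k * Y^(k*(k+1)/2) * qb (m+n+1) (n+k+1) := by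
    intro k hk; ring
  rw [Finset.sum_congr rfl e1, Finset.sum_congr rfl e2, Finset.sum_add_distrib,
    Finset.sum_add_distrib]
  have hG := Glem m n
  linear_combination (-1 : Polynomial ℤ) * hG
lemma Fmain : ∀ m n : ℕ, Pz m * Pz n = Rhs m n
  | 0, n => by
      have h := Fzero n
      rw [Fsym 0 n, ← h, Pz]
      simp [mul_comm]
  | m+1, n => Fstep m n (Fmain m n)


lemma factor : ∀ (a b : ℕ), Pz a * Pz b * qb (a+b) a = Pz (a+b)
  | 0, b => by simp [Pz]
  | a+1, 0 => by simp [show Pz 0 = 1 from Finset.prod_range_zero _]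
  | a+1, b+1 => by
      have IH1 := factor (a+1) b
      have IH2 := factor a (b+1)
      have h1 : Pz (a+1) = Pz a * (1 - Y^(a+1)) := Pz_succ a
      have h2 : Pz (b+1) = Pz b * (1 - Y^(b+1)) := Pz_succ b
      have h3 : Pz (a+1+(b+1)) = Pz (a+1+b) * (1 - Y^(a+1+b+1)) := by
        rw [show a+1+(b+1) = (a+1+b)+1 by omega]
        exact Pz_succ _
      have h4 : Pz (a+(b+1)) = Pz (a+1+b) := by rw [show a+(b+1) = a+1+b by omega]
      rw [h3, show a+1+(b+1) = (a+b+1)+1 by omega, qb_succ_succ,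
        show (a+b+1) - a = b+1 by omega]
      have hq : qb (a+b+1) (a+1) = qb (a+1+b) (a+1) := by rw [show a+b+1 = a+1+b by omega]
      rw [hq]
      have hY : (Y^(b+1) * Y^(a+1) : Polynomial ℤ) = Y^(a+1+b+1) := by
        rw [← pow_add]; congr 1; omega
      calc Pz (a+1) * Pz (b+1) * (qb (a+1+b) (a+1) + Y^(b+1) * qb (a+b+1) a)
          = (1 - Y^(b+1)) * (Pz (a+1) * Pz b * qb (a+1+b) (a+1))
            + Y^(b+1) * (1 - Y^(a+1)) * (Pz a * Pz (b+1) * qb (a+b+1) a) := by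
            rw [h1, h2]; ring
        _ = (1 - Y^(b+1)) * Pz (a+1+b)
            + Y^(b+1) * (1 - Y^(a+1)) * Pz (a+1+b) := by
            rw [IH1, show qb (a+b+1) a = qb (a+(b+1)) a by rw [show a+b+1 = a+(b+1) by omega],
              IH2, h4]
        _ = Pz (a+1+b) * (1 - Y^(a+1+b+1)) := by
            rw [← hY]; ring
  termination_by a b => a + b

lemma Pz_ne_zero (n : ℕ) : Pz n ≠ 0 := by
  rw [Pz]
  apply Finset.prod_ne_zero_iff.2
  intro i _
  intro h
  have := congrArg (fun p => Polynomial.coeff p 0) h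
  simp [Polynomial.coeff_one, Polynomial.coeff_X_pow] at this

/-- products of `1 - Y^(e i)` with all `e i ≥ d` are `≡ 1 mod Y^d`. -/
lemma dvd_prod_sub_one {ι : Type*} (s : Finset ι) (f : ι → Polynomial ℤ) (d : ℕ)
    (h : ∀ i ∈ s, Y^d ∣ f i - 1) : Y^d ∣ (∏ i ∈ s, f i) - 1 := by
  classical
  induction s using Finset.induction_on with
  | empty => simp
  | @insert a s' hx ih =>
      rw [Finset.prod_insert hx]
      have h1 : Y^d ∣ f a - 1 := h a (Finset.mem_insert_self a s')
      have h2 : Y^d ∣ (∏ i ∈ s', f i) - 1 := ih (fun i hi => h i (Finset.mem_insert_of_mem hi))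
      have : f a * ∏ i ∈ s', f i - 1
          = (f a - 1) * ∏ i ∈ s', f i + ((∏ i ∈ s', f i) - 1) := by ring
      rw [this]
      exact dvd_add (Dvd.dvd.mul_right h1 _) h2

lemma coeff_eq_of_dvd {p q : Polynomial ℤ} {d t : ℕ} (h : Y^d ∣ p - q) (ht : t < d) :
    p.coeff t = q.coeff t := by
  obtain ⟨w, hw⟩ := h
  have : p = q + w * Y^d := by rw [mul_comm]; linear_combination hw
  rw [this, Polynomial.coeff_add, Polynomial.coeff_mul_X_pow', if_neg (by omega), add_zero]

/-- The key truncation fact: `(q)_N · [2N+1, N+k+1] ≡ 1 mod Y^(N-k+1)` for `k ≤ N`. -/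
lemma Zk_dvd (N k : ℕ) (hk : k ≤ N) :
    Y^(N-k+1) ∣ (Pz N * qb (N+N+1) (N+k+1)) - 1 := by
  set A : Polynomial ℤ := ∏ i ∈ Finset.Ico N (N+k+1), (1 - Y^(i+1)) with hA
  set B : Polynomial ℤ := ∏ i ∈ Finset.Ico (N-k) (N+N+1), (1 - Y^(i+1)) with hB
  have hPA : Pz (N+k+1) = Pz N * A := by
    rw [Pz, Pz, hA, Finset.prod_range_mul_prod_Ico _ (show N ≤ N+k+1 by omega)]
  have hPB : Pz (N+N+1) = Pz (N-k) * B := by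
    rw [Pz, Pz, hB, Finset.prod_range_mul_prod_Ico _ (show N-k ≤ N+N+1 by omega)]
  have hfac := factor (N+k+1) (N-k)
  rw [show (N+k+1) + (N-k) = N+N+1 by omega] at hfac
  have hqb : qb (N+N+1) (N+k+1) = qb (N+N+1) (N+k+1) := rfl
  -- cancel Pz (N-k)
  have hcancel : A * (Pz N * qb (N+N+1) (N+k+1)) = B := by
    have hne := Pz_ne_zero (N-k)
    apply mul_left_cancel₀ hne
    calc Pz (N-k) * (A * (Pz N * qb (N+N+1) (N+k+1)))
        = (Pz N * A) * Pz (N-k) * qb (N+N+1) (N+k+1) := by ring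
      _ = Pz (N+k+1) * Pz (N-k) * qb (N+N+1) (N+k+1) := by rw [hPA]
      _ = Pz (N+N+1) := hfac
      _ = Pz (N-k) * B := hPB
  have hAd : Y^(N-k+1) ∣ A - 1 := by
    apply dvd_prod_sub_one
    intro i hi
    simp only [Finset.mem_Ico] at hi
    have : (1 - Y^(i+1) : Polynomial ℤ) - 1 = -Y^(i+1) := by ring
    rw [this]
    exact Dvd.dvd.neg_right (pow_dvd_pow _ (by omega))
  have hBd : Y^(N-k+1) ∣ B - 1 := by
    apply dvd_prod_sub_one
    intro i hi
    simp only [Finset.mem_Ico] at hi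
    have : (1 - Y^(i+1) : Polynomial ℤ) - 1 = -Y^(i+1) := by ring
    rw [this]
    exact Dvd.dvd.neg_right (pow_dvd_pow _ (by omega))
  have : (Pz N * qb (N+N+1) (N+k+1)) - 1
      = (B - 1) - (Pz N * qb (N+N+1) (N+k+1)) * (A - 1) := by
    rw [← hcancel]; ring
  rw [this]
  exact dvd_sub hBd (Dvd.dvd.mul_left hAd _)

lemma tri_ge (k : ℕ) : k ≤ k*(k+1)/2 := by
  rw [tri_step k]; exact Nat.le_add_left k _

lemma coeff_term {N : ℕ} (c : ℤ) (T d : ℕ) (Zp : Polynomial ℤ)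
    (hdvd : Y^d ∣ Zp - 1) (hT : N < T + d) :
    (Polynomial.C c * (Y^T * Zp)).coeff N = c * (if T = N then 1 else 0) := by
  rw [Polynomial.coeff_C_mul]
  congr 1
  rcases le_or_gt T N with hTN | hTN
  · rw [mul_comm, Polynomial.coeff_mul_X_pow', if_pos hTN,
      coeff_eq_of_dvd hdvd (show N - T < d by omega), Polynomial.coeff_one]
    split_ifs <;> omega
  · rw [mul_comm, Polynomial.coeff_mul_X_pow', if_neg (by omega), if_neg (by omega)]

lemma coeffPz3 (N : ℕ) : (Pz N ^ 3).coeff N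
    = (∑ k ∈ Finset.range (N+1), (-1:ℤ)^k * k * (if k*(k+1)/2 = N then 1 else 0))
    + ∑ j ∈ Finset.range (N+1), (-1:ℤ)^j * (j+1) * (if j*(j+1)/2 = N then 1 else 0) := by
  have h3 : Pz N ^ 3 = Pz N * (Pz N * Pz N) := by ring
  rw [h3, Fmain N N, Rhs, mul_add, Finset.mul_sum, Finset.mul_sum]
  have hL : ∀ k ∈ Finset.range (N+1),
      Pz N * ((-1:Polynomial ℤ)^k * (k:Polynomial ℤ) * Y^(k*(k+1)/2) * qb (N+N+1) (N+k+1))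
      = Polynomial.C ((-1:ℤ)^k * k) * (Y^(k*(k+1)/2) * (Pz N * qb (N+N+1) (N+k+1))) := by
    intro k hk
    simp only [map_mul, map_pow, map_neg, map_one, map_add, Polynomial.C_eq_natCast]
    ring
  have hR : ∀ j ∈ Finset.range (N+1),
      Pz N * ((-1:Polynomial ℤ)^j * ((j:Polynomial ℤ)+1) * Y^(j*(j+1)/2) * qb (N+N+1) (N-j))
      = Polynomial.C ((-1:ℤ)^j * (j+1)) * (Y^(j*(j+1)/2) * (Pz N * qb (N+N+1) (N+j+1))) := by
    intro j hj
    simp only [Finset.mem_range] at hj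
    rw [show N - j = (N+N+1) - (N+j+1) by omega, qb_symm (N+N+1) (N+j+1) (by omega),
      map_mul]
    simp only [map_mul, map_pow, map_neg, map_one, map_add, Polynomial.C_eq_natCast]
    ring
  rw [Finset.sum_congr rfl hL, Finset.sum_congr rfl hR, Polynomial.coeff_add,
    Polynomial.finset_sum_coeff, Polynomial.finset_sum_coeff]
  congr 1
  · apply Finset.sum_congr rfl
    intro k hk
    simp only [Finset.mem_range] at hk
    rw [coeff_term _ _ (N-k+1) _ (Zk_dvd N k (by omega))
      (by have := tri_ge k; omega)]
  · apply Finset.sum_congr rfl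
    intro j hj
    simp only [Finset.mem_range] at hj
    rw [coeff_term _ _ (N-j+1) _ (Zk_dvd N j (by omega))
      (by have := tri_ge j; omega)]

lemma coeffProd (N M : ℕ) (h : N ≤ M) :
    (∏ i ∈ Finset.range M, (1 - Y^(i+1))^3).coeff N = (Pz N ^ 3).coeff N := by
  rw [← Finset.prod_range_mul_prod_Ico _ h]
  have hPz : ∏ i ∈ Finset.range N, (1 - Y^(i+1))^3 = Pz N ^ 3 := by
    rw [Pz, ← Finset.prod_pow]
  rw [hPz]
  apply coeff_eq_of_dvd (d := N+1) _ (Nat.lt_succ_self N)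
  have hE : Y^(N+1) ∣ (∏ i ∈ Finset.Ico N M, (1 - Y^(i+1))^3) - 1 := by
    apply dvd_prod_sub_one
    intro i hi
    simp only [Finset.mem_Ico] at hi
    have hfac : (1 - Y^(i+1))^3 - 1 = Y^(i+1) * (((Y^(i+1))^2 - 3*Y^(i+1) + 3) * (-1)) := by
      ring
    rw [hfac]
    exact Dvd.dvd.mul_right (pow_dvd_pow _ (by omega)) _
  obtain ⟨w, hw⟩ := hE
  exact ⟨Pz N ^ 3 * w, by linear_combination (Pz N ^3) * hw⟩

/-- The bilateral form of Jacobi's identity `(q;q)_∞^3 = Σ_{k∈ℤ} (-1)^k k q^{k(k+1)/2}`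
in `ℤ[[q]]`, stated coefficientwise: for every `N`, the coefficient of `q^N` in any
sufficiently long truncation `∏_{i=1}^{M}(1-q^i)^3` (any `M ≥ N`) equals the coefficient
of `q^N` in the (finite) sum over all `k ∈ [-N-1, N+1]`, which contains every integer `k`
with `k(k+1)/2 ≤ N`. -/
theorem jacobi_identity_bilateral (N M : ℕ) (h : N ≤ M) :
    (PowerSeries.coeff (R := ℤ) N) (∏ i ∈ Finset.range M, (1 - (X : PowerSeries ℤ) ^ (i + 1)) ^ 3) =
      (PowerSeries.coeff (R := ℤ) N)
        (∑ k ∈ Finset.Icc (-(N : ℤ) - 1) ((N : ℤ) + 1),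
          PowerSeries.C (R := ℤ) ((((-1 : ℤˣ) ^ k : ℤˣ) : ℤ) * k) *
            (X : PowerSeries ℤ) ^ (k * (k + 1) / 2).toNat) := by
  -- LHS: reduce to polynomial coefficient
  have hcast : (∏ i ∈ Finset.range M, (1 - (X : PowerSeries ℤ) ^ (i + 1)) ^ 3)
      = ((∏ i ∈ Finset.range M, (1 - Y^(i+1))^3 : Polynomial ℤ) : PowerSeries ℤ) := by
    rw [show ((∏ i ∈ Finset.range M, (1 - Y^(i+1))^3 : Polynomial ℤ) : PowerSeries ℤ)
        = Polynomial.coeToPowerSeries.ringHom (∏ i ∈ Finset.range M, (1 - Y^(i+1))^3)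
        from rfl, map_prod]
    apply Finset.prod_congr rfl
    intro i _
    rw [Polynomial.coeToPowerSeries.ringHom_apply, Polynomial.coe_pow, Polynomial.coe_sub,
      Polynomial.coe_one, Polynomial.coe_pow, Polynomial.coe_X]
  rw [hcast, Polynomial.coeff_coe, coeffProd N M h, coeffPz3 N]
  -- RHS: expand the bilateral sum
  rw [map_sum]
  have hterm : ∀ k : ℤ, (PowerSeries.coeff (R := ℤ) N)
      (PowerSeries.C (R := ℤ) ((((-1 : ℤˣ) ^ k : ℤˣ) : ℤ) * k) *
        (X : PowerSeries ℤ) ^ (k * (k + 1) / 2).toNat)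
      = (((-1 : ℤˣ) ^ k : ℤˣ) : ℤ) * k * (if (k * (k + 1) / 2).toNat = N then 1 else 0) := by
    intro k
    rw [PowerSeries.coeff_C_mul, PowerSeries.coeff_X_pow]
    congr 1
    split_ifs with h1 h2 h2 <;> first | rfl | omega
  -- split the Icc into negative and nonnegative parts
  have hsplit : Finset.Icc (-(N : ℤ) - 1) ((N : ℤ) + 1)
      = ((Finset.range (N+1)).image (fun j : ℕ => (-(j:ℤ)-1)))
        ∪ ((Finset.range (N+2)).image (fun k : ℕ => (k:ℤ))) := by
    ext x
    simp only [Finset.mem_Icc, Finset.mem_union, Finset.mem_image, Finset.mem_range]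
    constructor
    · rintro ⟨h1, h2⟩
      rcases le_or_gt 0 x with hx | hx
      · right; exact ⟨x.toNat, by omega, by omega⟩
      · left; exact ⟨(-x-1).toNat, by omega, by omega⟩
    · rintro (⟨j, hj, rfl⟩ | ⟨k, hk, rfl⟩) <;> constructor <;> omega
  rw [hsplit, Finset.sum_union ?hdisj]
  case hdisj =>
    rw [Finset.disjoint_left]
    rintro a ha hb
    simp only [Finset.mem_image, Finset.mem_range] at ha hb
    obtain ⟨j, _, rfl⟩ := ha
    obtain ⟨k, _, hk⟩ := hb
    omega
  rw [Finset.sum_image (by intro x hx y hy hxy; simp only at hxy; omega),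
    Finset.sum_image (by intro x hx y hy hxy; simp only at hxy; omega)]
  simp only [hterm]
  conv_rhs => rw [add_comm]
  congr 1
  -- nonnegative part
  · conv_rhs => rw [Finset.sum_range_succ]
    have hlast : (((-1 : ℤˣ) ^ ((N+1 : ℕ):ℤ) : ℤˣ) : ℤ) * ((N+1 : ℕ):ℤ)
        * (if ((((N+1:ℕ):ℤ) * (((N+1:ℕ):ℤ) + 1) / 2).toNat) = N then 1 else 0) = 0 := by
      have he : (((N+1:ℕ):ℤ) * (((N+1:ℕ):ℤ) + 1) / 2).toNat = (N+1)*(N+2)/2 := by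
        rw [show ((N+1:ℕ):ℤ) * (((N+1:ℕ):ℤ) + 1) = (((N+1)*(N+2) : ℕ) : ℤ) by push_cast; ring,
          show (2:ℤ) = ((2:ℕ):ℤ) from rfl, ← Int.natCast_div, Int.toNat_natCast]
      rw [he, if_neg (by have := tri_succ N; omega), mul_zero]
    rw [hlast, add_zero]
    apply Finset.sum_congr rfl
    intro k hk
    have he : (((k:ℕ):ℤ) * (((k:ℕ):ℤ) + 1) / 2).toNat = k*(k+1)/2 := by
      rw [show ((k:ℕ):ℤ) * (((k:ℕ):ℤ) + 1) = (((k)*(k+1) : ℕ) : ℤ) by push_cast; ring,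
        show (2:ℤ) = ((2:ℕ):ℤ) from rfl, ← Int.natCast_div, Int.toNat_natCast]
    rw [he, zpow_natCast]
    simp only [Units.val_pow_eq_pow_val, Units.val_neg, Units.val_one]
  -- negative part
  · apply Finset.sum_congr rfl
    intro j hj
    have he : ((-(j:ℤ)-1) * ((-(j:ℤ)-1) + 1) / 2).toNat = j*(j+1)/2 := by
      rw [show (-(j:ℤ)-1) * ((-(j:ℤ)-1) + 1) = (((j)*(j+1) : ℕ) : ℤ) by push_cast; ring,
        show (2:ℤ) = ((2:ℕ):ℤ) from rfl, ← Int.natCast_div, Int.toNat_natCast]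
    rw [he]
    have hz : (-(j:ℤ)-1) = Int.negSucc j := by rw [Int.negSucc_eq]; push_cast; ring
    rw [hz, zpow_negSucc, ← inv_pow, show ((-1:ℤˣ))⁻¹ = -1 by decide]
    simp only [Units.val_pow_eq_pow_val, Units.val_neg, Units.val_one]
    rw [Int.negSucc_eq]
    push_cast
    ring
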